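/- Let E=(A,V,c,l) be a budgeting scenario with v = |V| voters, and let x, y ∈ A be two distinct projects with c(x) ≥ 1 and c(y) ≥ 1 such that x is approved by exactly d voters, y is approved by exactly d voters, at least one voter approves both x and y, and d² < v. Then the Möbius transform of the pair is positive, m({x,y},E) > 0, and consequently u_M({x,y},E) > c(x) + c(y). -/

import Mathlib

open Finset

/-- A participatory budgeting scenario `E = (A, V, c, l)`: a finite set of projects,
a finite nonempty family of voters each with an approval set of cost at most the budget. -/
structure Scenario (α ι : Type*) [DecidableEq α] where
  projects : Finset α
  voters : Finset ι
  voters_nonempty : voters.Nonempty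
  cost : α → ℕ
  budget : ℕ
  approval : ι → Finset α
  approval_subset : ∀ i ∈ voters, approval i ⊆ projects
  approval_feasible : ∀ i ∈ voters, ∑ a ∈ approval i, cost a ≤ budget

variable {α ι : Type*} [DecidableEq α]

/-- Appearance rate `r(S,V)`: the fraction of voters whose approval set contains `S`. -/
noncomputable def rate (E : Scenario α ι) (S : Finset α) : ℝ :=
  ((E.voters.filter fun i => S ⊆ E.approval i).card : ℝ) / (E.voters.card : ℝ)

/-- The Möbius transform `m(·,E)`: `m(∅,E) = 0`, `m({a},E) = c(a)` and, for `|S| ≥ 2`,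
`m(S,E) = max((r(S,V) - ∏_{a∈S} r({a},V))·c(S), max_{a∈S}(-∑_{C⊊S, a∈C} m(C,E)))`. -/
noncomputable def mobius (E : Scenario α ι) : Finset α → ℝ := fun S =>
  if h2 : 2 ≤ S.card then
    max ((rate E S - ∏ a ∈ S, rate E {a}) * (∑ a ∈ S, (E.cost a : ℝ)))
      (S.sup' (Finset.card_pos.mp (by omega)) fun a =>
        - ∑ C ∈ (S.powerset.filter fun C => C ≠ S ∧ a ∈ C).attach,
            mobius E C.1)
  else ∑ a ∈ S, (E.cost a : ℝ)
termination_by S => S.card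
decreasing_by
  have hC := C.2
  simp only [Finset.mem_filter, Finset.mem_powerset] at hC
  exact Finset.card_lt_card (hC.1.ssubset_of_ne hC.2.1)

/-- The utility function `u_M(S,E) = ∑_{C ⊆ S} m(C,E)`. -/
noncomputable def uM (E : Scenario α ι) (S : Finset α) : ℝ :=
  ∑ C ∈ S.powerset, mobius E C

/-- If two distinct projects of positive cost are each approved by exactly `d` voters,
are approved together by at least one voter, and `d² < |V|`, then the Möbius transform of
the pair is positive and `u_M({x,y},E) > c(x) + c(y)`. -/
theorem mobius_pair_positive (E : Scenario α ι) (x y : α) (d : ℕ)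
    (hx : x ∈ E.projects) (hy : y ∈ E.projects) (hxy : x ≠ y)
    (hcx : 1 ≤ E.cost x) (hcy : 1 ≤ E.cost y)
    (hdx : (E.voters.filter fun i => x ∈ E.approval i).card = d)
    (hdy : (E.voters.filter fun i => y ∈ E.approval i).card = d)
    (hboth : ∃ i ∈ E.voters, x ∈ E.approval i ∧ y ∈ E.approval i)
    (hd : d ^ 2 < E.voters.card) :
    0 < mobius E {x, y} ∧ ((E.cost x : ℝ) + (E.cost y : ℝ)) < uM E {x, y} := by
  classical
  have hv : 0 < E.voters.card := E.voters_nonempty.card_pos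
  set v : ℕ := E.voters.card with hvdef
  -- rate of singletons
  have hrx : rate E {x} = (d : ℝ) / v := by
    unfold rate
    simp only [Finset.singleton_subset_iff, hdx]
    rfl
  have hry : rate E {y} = (d : ℝ) / v := by
    unfold rate
    simp only [Finset.singleton_subset_iff, hdy]
    rfl
  -- rate of the pair is at least 1/v
  have hvR : (0 : ℝ) < v := by exact_mod_cast hv
  -- rate of the pair is at least 1/v
  have hrpair : (1 : ℝ) / v ≤ rate E {x, y} := by
    unfold rate
    have hnum : (1 : ℝ) ≤ ((E.voters.filter fun i => ({x, y} : Finset α) ⊆ E.approval i).card : ℝ) := by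
      obtain ⟨i, hi, hix, hiy⟩ := hboth
      have : 1 ≤ (E.voters.filter fun i => ({x, y} : Finset α) ⊆ E.approval i).card := by
        refine Finset.card_pos.mpr ⟨i, Finset.mem_filter.mpr ⟨hi, ?_⟩⟩
        intro a ha
        rcases Finset.mem_insert.mp ha with rfl | ha
        · exact hix
        · rw [Finset.mem_singleton.mp ha]; exact hiy
      exact_mod_cast this
    rw [div_le_div_iff₀ hvR hvR]
    nlinarith
  -- positivity of the first argument of the max
  have hprod : ∏ a ∈ ({x, y} : Finset α), rate E {a} = (d : ℝ) / v * ((d : ℝ) / v) := by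
    rw [Finset.prod_pair hxy, hrx, hry]
  have hkey : (0 : ℝ) < rate E {x, y} - ∏ a ∈ ({x, y} : Finset α), rate E {a} := by
    rw [hprod]
    have h1 : (d : ℝ) / v * ((d : ℝ) / v) < 1 / v := by
      rw [div_mul_div_comm, div_lt_div_iff₀ (by positivity) hvR]
      have : ((d : ℝ) * d) < v := by exact_mod_cast (by rw [← pow_two]; exact hd : d * d < v)
      nlinarith
    linarith
  have hcost : (0 : ℝ) < ∑ a ∈ ({x, y} : Finset α), (E.cost a : ℝ) := by
    rw [Finset.sum_pair hxy]
    have : (1 : ℝ) ≤ E.cost x := by exact_mod_cast hcx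
    have h2 : (0 : ℝ) ≤ E.cost y := by positivity
    linarith
  have hcard : ({x, y} : Finset α).card = 2 := Finset.card_pair hxy
  have hm : 0 < mobius E {x, y} := by
    rw [mobius]
    rw [dif_pos (by rw [hcard])]
    exact lt_max_of_lt_left (by positivity)
  refine ⟨hm, ?_⟩
  -- small sets
  have hsmall : ∀ S : Finset α, S.card < 2 → mobius E S = ∑ a ∈ S, (E.cost a : ℝ) := by
    intro S hS
    rw [mobius, dif_neg (by omega)]
  have hm0 : mobius E ∅ = 0 := by rw [hsmall ∅ (by simp)]; simp
  have hmx : mobius E {x} = (E.cost x : ℝ) := by rw [hsmall {x} (by simp)]; simp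
  have hmy : mobius E {y} = (E.cost y : ℝ) := by rw [hsmall {y} (by simp)]; simp
  have huM : uM E {x, y} = mobius E ∅ + mobius E {y} + (mobius E {x} + mobius E {x, y}) := by
    unfold uM
    rw [show ({x, y} : Finset α) = insert x {y} from rfl]
    rw [Finset.sum_powerset_insert (by simp [hxy])]
    rw [show ({y} : Finset α) = insert y (∅ : Finset α) from rfl]
    rw [Finset.sum_powerset_insert (show y ∉ (∅ : Finset α) by simp)]
    rw [Finset.sum_powerset_insert (show y ∉ (∅ : Finset α) by simp)]
    simp [Finset.powerset_empty]
  rw [huM, hm0, hmx, hmy]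
  linarith
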